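/- Let σ : A → A^+ be an aperiodic substitution on a finite alphabet. Then there exists M > 0 such that every word W ∈ L(X_σ) with |W| ≥ M contains at least one letter from A_l. -/

import Mathlib

open Filter Topology

namespace PaperStmt

variable {A : Type*} {B : Type*}

/-- Apply a substitution (letter-to-word map) to a word, by concatenation. -/
def substWord (σ : B → List A) (w : List B) : List A := w.flatMap σ

/-- `σ^n` applied to a word. -/
def substIter (σ : A → List A) (n : ℕ) (w : List A) : List A := (substWord σ)^[n] w

/-- `σ^n(a)` for a letter `a`. -/
def substPow (σ : A → List A) (n : ℕ) (a : A) : List A := substIter σ n [a]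

/-- The language of a substitution: factors of some `σ^n(a)`, `n ≥ 1`. -/
def Lang (σ : A → List A) : Set (List A) :=
  {w | ∃ a : A, ∃ n : ℕ, 1 ≤ n ∧ w <:+: substIter σ n [a]}

/-- The word `x[i], x[i+1], …, x[i+len-1]` read in a bi-infinite sequence. -/
def seg (x : ℤ → A) (i : ℤ) (len : ℕ) : List A :=
  (List.range len).map fun k => x (i + k)

/-- The phase space `X_σ` of the substitutional dynamical system. -/
def Xsub (σ : A → List A) : Set (ℤ → A) :=
  {x | ∀ n : ℕ, seg x (-(n : ℤ)) (2 * n + 1) ∈ Lang σ}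

/-- `L(X_σ)`: all finite words occurring in elements of `X_σ`. -/
def LangX (σ : A → List A) : Set (List A) :=
  {w | ∃ x ∈ Xsub σ, ∃ i : ℤ, seg x i w.length = w}

/-- The left shift `T`. -/
def shift (x : ℤ → A) : ℤ → A := fun k => x (k + 1)

/-- The power `T^i` of the left shift, `i ∈ ℤ`. -/
def shiftZ (i : ℤ) (x : ℤ → A) : ℤ → A := fun k => x (k + i)

/-- `(X_σ, T_σ)` has no periodic points. -/
def Aperiodic (σ : A → List A) : Prop :=
  ∀ x ∈ Xsub σ, ∀ p : ℕ, 0 < p → shiftZ (p : ℤ) x ≠ x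

/-- The coordinate at which the `n`-th block of the bi-infinite concatenation
`⋯ σ(x_{-1}).σ(x_0) σ(x_1) ⋯` starts (block `0` starts at coordinate `0`). -/
def blockStart (σ : B → List A) (x : ℤ → B) (n : ℤ) : ℤ :=
  if 0 ≤ n then ∑ j ∈ Finset.range n.toNat, ((σ (x (j : ℤ))).length : ℤ)
  else -∑ j ∈ Finset.range (-n).toNat, ((σ (x (-(j : ℤ) - 1))).length : ℤ)

/-- `y` is the image of the bi-infinite sequence `x` under the substitution `σ`,
i.e. `y = ⋯ σ(x_{-1}).σ(x_0)σ(x_1)⋯` with `σ(x_0)` starting at coordinate `0`. -/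
def IsSubstImage (σ : B → List A) (x : ℤ → B) (y : ℤ → A) : Prop :=
  ∀ n : ℤ, seg y (blockStart σ x n) (σ (x n)).length = σ (x n)

/-- `A_l`: the letters `a` with `|σ^n(a)| → ∞`. -/
def longLetters (σ : A → List A) : Set A :=
  {a | Tendsto (fun n => (substPow σ n a).length) atTop atTop}

/-- A minimal component of `(X_σ, T_σ)`: a nonempty closed shift-invariant subset of `X_σ`
that is minimal with respect to inclusion. -/
def MinimalComponent [TopologicalSpace A] (σ : A → List A) (Z : Set (ℤ → A)) : Prop :=
  Z.Nonempty ∧ IsClosed Z ∧ Z ⊆ Xsub σ ∧ shift '' Z = Z ∧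
    ∀ Z' : Set (ℤ → A), Z'.Nonempty → IsClosed Z' → Z' ⊆ Z → shift '' Z' = Z' → Z' = Z

/-- The element `T_σ^i σ^n([a])` of the Kakutani–Rokhlin partition `P_n`. -/
def piece (σ : A → List A) (n : ℕ) (a : A) (i : ℕ) : Set (ℤ → A) :=
  {x | ∃ y z : ℤ → A, y ∈ Xsub σ ∧ y 0 = a ∧
    IsSubstImage (substPow σ n) y z ∧ x = shiftZ (i : ℤ) z}

/-- An `m`-primitive substitution, with respect to a decomposition
`A = P 0 ⊔ … ⊔ P (m-1) ⊔ A0`. -/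
def IsMPrimitive (σ : A → List A) (m : ℕ) (P : Fin m → Set A) (A0 : Set A) : Prop :=
  (∀ i j : Fin m, i ≠ j → Disjoint (P i) (P j)) ∧
  (∀ i, Disjoint (P i) A0) ∧
  ((⋃ i, P i) ∪ A0 = Set.univ) ∧
  (∀ i, ∃ a ∈ P i, ∃ b ∈ P i, a ≠ b) ∧
  (∀ i, ∀ a ∈ P i, ∀ b ∈ σ a, b ∈ P i) ∧
  (∀ i, ∀ a ∈ P i, ∀ b ∈ P i, ∃ n : ℕ, 1 ≤ n ∧ b ∈ substPow σ n a) ∧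
  (∀ a : A, ∃ n : ℕ, 0 < n ∧ ∃ i, ∃ b ∈ P i, b ∈ substPow σ n a) ∧
  (∀ k : ℕ, 1 ≤ k → Lang (substPow σ k) = Lang σ) ∧
  (∀ a : A, [a] ∈ LangX σ)

/-- The set `Z_i` attached to the part `A_i = P i` of an `m`-primitive substitution. -/
def Zset (σ : A → List A) {m : ℕ} (P : Fin m → Set A) (i : Fin m) : Set (ℤ → A) :=
  {x | x ∈ Xsub σ ∧ ∀ n : ℕ, ∃ k : ℕ, 1 ≤ k ∧ ∃ a ∈ P i,
    seg x (-(n : ℤ)) (2 * n + 1) <:+: substPow σ k a}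

/-- The clopen set `W = ∪_i [r_i.l_i]` built from fixed points `w i`. -/
def Wset (σ : A → List A) {m : ℕ} (w : Fin m → ℤ → A) : Set (ℤ → A) :=
  ⋃ i : Fin m, {x | x ∈ Xsub σ ∧ x (-1) = w i (-1) ∧ x 0 = w i 0}

/-- A return word, given the letters `r i = w_i[-1]` and `l i = w_i[0]`. -/
def IsReturnWord (σ : A → List A) {m : ℕ} (r l : Fin m → A) (u : List A) : Prop :=
  u ∈ LangX σ ∧ u ≠ [] ∧ ∃ i j : Fin m,
    (r i :: (u ++ [l j])) ∈ LangX σ ∧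
    u.head? = some (l i) ∧ u.getLast? = some (r j) ∧
    ∀ t : Fin m, ¬ ([r t, l t] <:+: u)

/-- A proper substitution. -/
def IsProper (σ : A → List A) : Prop :=
  ∃ p : ℕ, 0 < p ∧ ∀ a : A,
    (∀ b c : A, [a, b] ∈ LangX σ → [a, c] ∈ LangX σ →
      (substPow σ p b).head? = (substPow σ p c).head?) ∧
    (∀ b c : A, [b, a] ∈ LangX σ → [c, a] ∈ LangX σ →
      (substPow σ p b).getLast? = (substPow σ p c).getLast?)

/-- Membership in the set `V` of words `v₁S₁v₂S₂v₃` with `v₁,v₂,v₃ ∈ A_l`, `S₁,S₂ ∈ A_s^*`. -/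
def Vcond (σ : A → List A) : A × List A × A × List A × A → Prop
  | (v1, S1, v2, S2, v3) =>
    v1 ∈ longLetters σ ∧ v2 ∈ longLetters σ ∧ v3 ∈ longLetters σ ∧
    (∀ c ∈ S1, c ∉ longLetters σ) ∧ (∀ c ∈ S2, c ∉ longLetters σ) ∧
    (v1 :: (S1 ++ v2 :: (S2 ++ [v3]))) ∈ LangX σ

/-- The cylinder set `[v₁S₁.v₂S₂v₃]`. -/
def Vbase (σ : A → List A) : A × List A × A × List A × A → Set (ℤ → A)
  | (v1, S1, v2, S2, v3) =>
    {x | x ∈ Xsub σ ∧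
      seg x (-(1 + S1.length : ℤ)) (v1 :: (S1 ++ v2 :: (S2 ++ [v3]))).length
        = v1 :: (S1 ++ v2 :: (S2 ++ [v3]))}

/-- The height `|σ^n(v₂S₂)|` of the tower over `[v₁S₁.v₂S₂v₃]` in `Ξ_n`. -/
def Vheight (σ : A → List A) (n : ℕ) : A × List A × A × List A × A → ℕ
  | (_, _, v2, S2, _) => (substWord (substPow σ n) (v2 :: S2)).length

/-- The element `T_σ^i σ^n([v₁S₁.v₂S₂v₃])` of the Kakutani–Rokhlin partition `Ξ_n`. -/
def Vpiece (σ : A → List A) (n : ℕ) (q : A × List A × A × List A × A) (i : ℕ) :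
    Set (ℤ → A) :=
  {x | ∃ y z : ℤ → A, y ∈ Vbase σ q ∧ IsSubstImage (substPow σ n) y z ∧
    x = shiftZ (i : ℤ) z}

/-- Membership in `Λ`. -/
def MemLambda (σ : A → List A) (s : ℕ → A × A) : Prop :=
  ∀ n : ℕ, [(s n).1, (s n).2] ∈ Lang σ ∧
    (σ (s (n + 1)).1).getLast? = some (s n).1 ∧
    (σ (s (n + 1)).2).head? = some (s n).2

/-- `x = w(s̄)` for `s̄ ∈ Λ`. -/
def IsLambdaPoint (σ : A → List A) (s : ℕ → A × A) (x : ℤ → A) : Prop :=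
  ∀ n : ℕ, seg x (-((substPow σ n (s n).1).length : ℤ))
      ((substPow σ n (s n).1).length + (substPow σ n (s n).2).length)
    = substPow σ n (s n).1 ++ substPow σ n (s n).2

/-- Membership in `M`: `i₀ = 0` and `a_j` occurs at position `i_{j+1}` of `σ(a_{j+1})`. -/
def MemM (σ : A → List A) (t : ℕ → A × ℕ) : Prop :=
  (t 0).2 = 0 ∧ ∀ j : ℕ, (σ (t (j + 1)).1)[(t (j + 1)).2]? = some (t j).1

/-- The cutting points `j_n` attached to an element of `M`. -/
def jSeq (σ : A → List A) (t : ℕ → A × ℕ) : ℕ → ℕ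
  | 0 => 0
  | n + 1 =>
      jSeq σ t n + (substWord (substPow σ n) ((σ (t (n + 1)).1).take (t (n + 1)).2)).length

/-- Membership in `M₀`: `j_n → ∞` and `|σ^n(a_n)| - j_n → ∞`. -/
def MZero (σ : A → List A) (t : ℕ → A × ℕ) : Prop :=
  MemM σ t ∧ ∀ N : ℕ, ∃ n0 : ℕ, ∀ n ≥ n0,
    N ≤ jSeq σ t n ∧ jSeq σ t n + N ≤ (substPow σ n (t n).1).length

/-- `x = w(m̄)` for `m̄ ∈ M₀`. -/
def IsMPoint (σ : A → List A) (t : ℕ → A × ℕ) (x : ℤ → A) : Prop :=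
  ∀ n : ℕ, seg x (-(jSeq σ t n : ℤ)) (substPow σ n (t n).1).length = substPow σ n (t n).1


section ProofAux
variable (σ : A → List A)

lemma substWord_append (u v : List A) :
    substWord σ (u ++ v) = substWord σ u ++ substWord σ v :=
  List.flatMap_append

lemma substWord_singleton (a : A) : substWord σ [a] = σ a := by
  simp [substWord]

@[simp] lemma substIter_zero (w : List A) : substIter σ 0 w = w := rfl

lemma substIter_succ (n : ℕ) (w : List A) :
    substIter σ (n+1) w = substIter σ n (substWord σ w) :=
  Function.iterate_succ_apply _ _ _

lemma substIter_succ' (n : ℕ) (w : List A) :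
    substIter σ (n+1) w = substWord σ (substIter σ n w) :=
  Function.iterate_succ_apply' _ _ _

lemma substIter_add (m n : ℕ) (w : List A) :
    substIter σ (m + n) w = substIter σ m (substIter σ n w) :=
  Function.iterate_add_apply _ _ _ _

lemma substIter_append (n : ℕ) (u v : List A) :
    substIter σ n (u ++ v) = substIter σ n u ++ substIter σ n v := by
  induction n generalizing u v with
  | zero => rfl
  | succ n ih => rw [substIter_succ, substWord_append, ih, substIter_succ, substIter_succ]

lemma substIter_flatMap (n : ℕ) (w : List A) :
    substIter σ n w = w.flatMap (substPow σ n) := by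
  induction w with
  | nil =>
      have : substIter σ n ([] : List A) = [] := by
        induction n with
        | zero => rfl
        | succ n ih => rw [substIter_succ']; rw [ih]; rfl
      simpa using this
  | cons c w ih =>
      have : (c :: w) = [c] ++ w := rfl
      rw [this, substIter_append, ih, List.flatMap_append, List.flatMap_singleton]
      rfl

lemma substPow_succ_flatMap (n : ℕ) (a : A) :
    substPow σ (n+1) a = (σ a).flatMap (substPow σ n) := by
  rw [substPow, substIter_succ, substWord_singleton, substIter_flatMap]

lemma length_substWord_ge (hne : ∀ a, σ a ≠ []) (w : List A) :
    w.length ≤ (substWord σ w).length := by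
  induction w with
  | nil => simp [substWord]
  | cons c w ih =>
      have h1 : 1 ≤ (σ c).length := List.length_pos_iff.2 (hne c)
      have : substWord σ (c :: w) = σ c ++ substWord σ w := rfl
      rw [this, List.length_append, List.length_cons]
      omega

lemma length_substPow_mono (hne : ∀ a, σ a ≠ []) (a : A) :
    Monotone (fun n => (substPow σ n a).length) := by
  apply monotone_nat_of_le_succ
  intro n
  rw [substPow, substPow, substIter_succ']
  exact length_substWord_ge σ hne _

lemma substIter_ne_nil (hne : ∀ a, σ a ≠ []) {w : List A} (hw : w ≠ []) (n : ℕ) :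
    substIter σ n w ≠ [] := by
  induction n with
  | zero => simpa
  | succ n ih =>
      rw [substIter_succ']
      intro h
      rcases List.exists_cons_of_ne_nil ih with ⟨c, l, hl⟩
      rw [hl] at h
      have : substWord σ (c :: l) = σ c ++ substWord σ l := rfl
      rw [this] at h
      exact hne c (List.append_eq_nil_iff.1 h).1

lemma substPow_ne_nil (hne : ∀ a, σ a ≠ []) (n : ℕ) (a : A) :
    substPow σ n a ≠ [] :=
  substIter_ne_nil σ hne (by simp) n

lemma Lang_infix_closed {w v : List A} (hw : w <:+: v) (hv : v ∈ Lang σ) :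
    w ∈ Lang σ := by
  obtain ⟨a, n, hn, hinf⟩ := hv
  exact ⟨a, n, hn, hw.trans hinf⟩


/-- a letter is short iff its iterate lengths are bounded (given nonemptiness) -/
lemma short_of_bounded (hne : ∀ a, σ a ≠ []) {a : A} {C : ℕ}
    (h : ∀ m, (substPow σ m a).length ≤ C) : a ∉ longLetters σ := by
  intro hl
  obtain ⟨m, hm⟩ := (tendsto_atTop.1 hl (C+1)).exists
  have := h m
  omega

lemma bounded_of_short (hne : ∀ a, σ a ≠ []) {a : A} (h : a ∉ longLetters σ) :
    ∃ C, ∀ m, (substPow σ m a).length ≤ C := by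
  by_contra hc
  push_neg at hc
  apply h
  apply tendsto_atTop_atTop_of_monotone (length_substPow_mono σ hne a)
  intro b
  obtain ⟨m, hm⟩ := hc b
  exact ⟨m, hm.le⟩

/-- global bound for short letters -/
lemma exists_short_bound (hne : ∀ a, σ a ≠ []) [Fintype A] :
    ∃ K, ∀ a ∉ longLetters σ, ∀ m, (substPow σ m a).length ≤ K := by
  have : ∀ a : A, ∃ k, a ∉ longLetters σ → ∀ m, (substPow σ m a).length ≤ k := by
    intro a
    by_cases h : a ∈ longLetters σ
    · exact ⟨0, fun h' => absurd h h'⟩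
    · obtain ⟨C, hC⟩ := bounded_of_short σ hne h
      exact ⟨C, fun _ => hC⟩
  choose g hg using this
  refine ⟨Finset.univ.sup g, fun a ha m => ?_⟩
  exact le_trans (hg a ha m) (Finset.le_sup (Finset.mem_univ a))

variable (σ : A → List A)

lemma substPow_infix_of_mem {e : A} {w : List A} (he : e ∈ w) (n : ℕ) :
    substPow σ n e <:+: substIter σ n w := by
  obtain ⟨s, t, hst⟩ := List.append_of_mem he
  subst hst
  rw [substIter_flatMap]
  refine ⟨s.flatMap (substPow σ n), t.flatMap (substPow σ n), ?_⟩
  simp [List.flatMap_append]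

/-- if all letters of σ^j(c) are short (with global bound K), then c is short -/
lemma short_of_block_short (hne : ∀ a, σ a ≠ []) {K : ℕ}
    (hK : ∀ a ∉ longLetters σ, ∀ m, (substPow σ m a).length ≤ K)
    {c : A} {j : ℕ} (h : ∀ e ∈ substPow σ j c, e ∉ longLetters σ) :
    c ∉ longLetters σ := by
  set C := (substPow σ j c).length * K with hC
  apply short_of_bounded σ hne (C := C + (substPow σ j c).length)
  intro m
  rcases le_or_gt m j with hmj | hmj
  · have h2 := length_substPow_mono σ hne c hmj
    simp only at h2
    omega
  · have hm : m = (m - j) + j := by omega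
    have hrw : substPow σ m c = substIter σ (m - j) (substPow σ j c) := by
      conv_lhs => rw [substPow, hm]
      rw [substIter_add]; rfl
    rw [hrw, substIter_flatMap, List.length_flatMap]
    have : ∀ x ∈ (substPow σ j c).map (List.length ∘ fun e => substPow σ (m - j) e), x ≤ K := by
      intro x hx
      simp only [List.mem_map] at hx
      obtain ⟨e, he, rfl⟩ := hx
      exact hK e (h e he) (m - j)
    calc ((substPow σ j c).map (List.length ∘ fun e => substPow σ (m-j) e)).sum
        ≤ ((substPow σ j c).map (List.length ∘ fun e => substPow σ (m-j) e)).length * K :=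
          List.sum_le_card_nsmul _ _ this
      _ ≤ C + (substPow σ j c).length := by simp [hC]

/-- letters occurring in iterates of short letters are short -/
lemma short_of_mem_substPow (hne : ∀ a, σ a ≠ []) {K : ℕ}
    (hK : ∀ a ∉ longLetters σ, ∀ m, (substPow σ m a).length ≤ K)
    {c e : A} {i : ℕ} (hc : c ∉ longLetters σ) (he : e ∈ substPow σ i c) :
    e ∉ longLetters σ := by
  apply short_of_bounded σ hne (C := K)
  intro m
  have h1 : substPow σ m e <:+: substIter σ m (substPow σ i c) :=
    substPow_infix_of_mem σ he m
  have hrw : substIter σ m (substPow σ i c) = substPow σ (m + i) c := by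
    rw [substPow, ← substIter_add]; rfl
  rw [hrw] at h1
  have h2 : (substPow σ m e).length ≤ (substPow σ (m + i) c).length :=
    h1.length_le
  exact le_trans h2 (hK c hc (m + i))

variable (σ : A → List A)

lemma exists_eventually_periodic [Fintype A] {K : ℕ}
    (hK : ∀ a ∉ longLetters σ, ∀ m, (substPow σ m a).length ≤ K) :
    ∃ N p : ℕ, 1 ≤ p ∧ ∀ a ∉ longLetters σ, ∀ s, N ≤ s →
      substPow σ (s + p) a = substPow σ s a := by
  classical
  have hfin : Finite {l : List A // l.length ≤ K} := by
    have := List.finite_length_le A K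
    exact this.to_subtype
  let Φ : ℕ → ({a : A // a ∉ longLetters σ} → {l : List A // l.length ≤ K}) :=
    fun m a => ⟨substPow σ m a.1, hK a.1 a.2 m⟩
  obtain ⟨m, m', hne', heq⟩ := Finite.exists_ne_map_eq_of_infinite Φ
  wlog hlt : m < m' generalizing m m'
  · exact this m' m (Ne.symm hne') heq.symm (by omega)
  refine ⟨m, m' - m, by omega, ?_⟩
  have key : ∀ t, ∀ a ∉ longLetters σ, substPow σ (m + t + (m' - m)) a = substPow σ (m + t) a := by
    intro t
    induction t with
    | zero =>
        intro a ha
        have := congrFun heq ⟨a, ha⟩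
        have h2 : substPow σ m a = substPow σ m' a := congrArg Subtype.val this
        have : m + 0 + (m' - m) = m' := by omega
        rw [this, ← h2]; rfl
    | succ t ih =>
        intro a ha
        have e1 : m + (t+1) + (m' - m) = (m + t + (m' - m)) + 1 := by omega
        have e2 : m + (t+1) = (m + t) + 1 := by omega
        rw [e1, e2, substPow, substPow, substIter_succ', substIter_succ']
        congr 1
        exact ih a ha
  intro a ha s hs
  have : s = m + (s - m) := by omega
  rw [this]
  exact key (s - m) a ha

lemma periodic_mul {N p : ℕ}
    (hp : ∀ a ∉ longLetters σ, ∀ s, N ≤ s → substPow σ (s + p) a = substPow σ s a)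
    (a : A) (ha : a ∉ longLetters σ) (s : ℕ) (hs : N ≤ s) (k : ℕ) :
    substPow σ (s + k * p) a = substPow σ s a := by
  induction k with
  | zero => simp
  | succ k ih =>
      have e1 : s + (k+1) * p = (s + k * p) + p := by ring
      rw [e1, hp a ha _ (by omega), ih]

lemma periodic_word {N p : ℕ}
    (hp : ∀ a ∉ longLetters σ, ∀ s, N ≤ s → substPow σ (s + p) a = substPow σ s a)
    {u : List A} (hu : ∀ c ∈ u, c ∉ longLetters σ) (s : ℕ) (hs : N ≤ s) (k : ℕ) :
    substIter σ (s + k * p) u = substIter σ s u := by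
  rw [substIter_flatMap, substIter_flatMap]
  unfold List.flatMap
  congr 1
  apply List.map_congr_left
  intro c hc
  exact periodic_mul σ hp c (hu c hc) s hs k

variable (σ : A → List A)

lemma suffix_split {W X Y : List A} (h : W <:+ X ++ Y) :
    W <:+ Y ∨ ∃ s, s <:+ X ∧ W = s ++ Y := by
  obtain ⟨pre, hpre⟩ := h
  rcases List.append_eq_append_iff.1 hpre with ⟨a', ha1, ha2⟩ | ⟨c', hc1, hc2⟩
  · exact Or.inr ⟨a', ⟨pre, ha1.symm⟩, ha2⟩
  · exact Or.inl ⟨c', hc2.symm⟩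

lemma suffix_flatMap_decomp (g : A → List A) :
    ∀ (l : List A) (W : List A), l ≠ [] → W <:+ l.flatMap g →
    ∃ l₁ d l₂ s, l = l₁ ++ d :: l₂ ∧ s <:+ g d ∧ W = s ++ l₂.flatMap g := by
  intro l
  induction l with
  | nil => intro W h; exact absurd rfl h
  | cons d₀ rest ih =>
      intro W _ hW
      rcases rest.eq_nil_or_concat with rfl | hne
      · refine ⟨[], d₀, [], W, rfl, ?_, by simp⟩
        simpa using hW
      · have hrne : rest ≠ [] := by rcases hne with ⟨l', a, rfl⟩; simp
        have : (d₀ :: rest).flatMap g = g d₀ ++ rest.flatMap g := by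
          simp [List.flatMap_cons]
        rw [this] at hW
        rcases suffix_split hW with h | ⟨s, hs, rfl⟩
        · obtain ⟨l₁, d, l₂, s, h1, h2, h3⟩ := ih _ hrne h
          exact ⟨d₀ :: l₁, d, l₂, s, by rw [h1]; simp, h2, h3⟩
        · exact ⟨[], d₀, rest, s, rfl, hs, rfl⟩

/-- the suffix decomposition along the ancestry chain -/
lemma dec (hne : ∀ a, σ a ≠ []) {K : ℕ}
    (hK : ∀ a ∉ longLetters σ, ∀ m, (substPow σ m a).length ≤ K) :
    ∀ (n : ℕ) (b : A) (W : List A), W <:+ substPow σ n b →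
      (∀ c ∈ W, c ∉ longLetters σ) →
      ∃ (e : ℕ → A) (t : ℕ → List A),
        e n = b ∧
        (∀ j, j < n → ([e j] ++ t j) <:+ σ (e (j+1))) ∧
        (∀ j, j < n → ∀ c ∈ t j, c ∉ longLetters σ) ∧
        W <:+ ([e 0] ++ (List.range n).flatMap (fun j => substIter σ j (t j))) := by
  intro n
  induction n with
  | zero =>
      intro b W hW hsh
      exact ⟨fun _ => b, fun _ => [], rfl, fun j hj => absurd hj (by omega),
        fun j hj => absurd hj (by omega), by simpa [substPow] using hW⟩
  | succ n ih =>
      intro b W hW hsh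
      rw [substPow_succ_flatMap] at hW
      obtain ⟨l₁, d, l₂, s, hsplit, hsuf, rfl⟩ :=
        suffix_flatMap_decomp (substPow σ n) (σ b) _ (hne b) hW
      have hs_short : ∀ c ∈ s, c ∉ longLetters σ := fun c hc =>
        hsh c (List.mem_append_left _ hc)
      obtain ⟨e', t', he'n, hchain, htshort, hsfx⟩ := ih d s hsuf hs_short
      classical
      refine ⟨fun j => if j = n + 1 then b else e' j,
              fun j => if j = n then l₂ else t' j, by simp, ?_, ?_, ?_⟩
      · intro j hj
        rcases Nat.lt_or_ge j n with hjn | hjn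
        · have h1 : j ≠ n + 1 := by omega
          have h2 : j ≠ n := by omega
          have h3 : j + 1 ≠ n + 1 := by omega
          simp only [h1, h2, h3, if_false]
          exact hchain j hjn
        · have hj_eq : j = n := by omega
          have h1 : n ≠ n + 1 := by omega
          simp only [hj_eq, h1, if_false, eq_self_iff_true, if_true]
          rw [he'n, hsplit]
          exact ⟨l₁, rfl⟩
      · intro j hj c hc
        rcases Nat.lt_or_ge j n with hjn | hjn
        · have h2 : j ≠ n := by omega
          simp only [h2, if_false] at hc
          exact htshort j hjn c hc
        · have hj_eq : j = n := by omega
          simp only [hj_eq, eq_self_iff_true, if_true] at hc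
          apply short_of_block_short σ hne hK (j := n)
          intro x hx
          apply hsh
          apply List.mem_append_right
          obtain ⟨u1, u2, hu⟩ := List.append_of_mem hc
          have hsplit2 : l₂.flatMap (substPow σ n) =
              u1.flatMap (substPow σ n) ++ (substPow σ n c ++ u2.flatMap (substPow σ n)) := by
            rw [hu]; simp [List.flatMap_cons, List.flatMap_append]
          rw [hsplit2]
          exact List.mem_append_right _ (List.mem_append_left _ hx)
      · have hrange : (List.range (n+1)).flatMap
              (fun j => substIter σ j (if j = n then l₂ else t' j))
            = (List.range n).flatMap (fun j => substIter σ j (t' j))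
              ++ substIter σ n l₂ := by
          rw [List.range_succ, List.flatMap_append, List.flatMap_singleton, if_pos rfl]
          congr 1
          apply List.flatMap_congr
          intro j hj
          rw [List.mem_range] at hj
          rw [if_neg (by omega)]
        have h0 : (0 : ℕ) ≠ n + 1 := by omega
        simp only [h0, if_false]
        rw [hrange]
        obtain ⟨pre, hpre⟩ := hsfx
        refine ⟨pre, ?_⟩
        rw [substIter_flatMap, ← List.append_assoc, ← List.append_assoc, hpre,
          List.append_assoc]

variable (σ : A → List A)

lemma sum_range_list (m : ℕ) (g : ℕ → ℕ) :
    ((List.range m).map g).sum = ∑ j ∈ Finset.range m, g j := by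
  induction m with
  | zero => simp
  | succ m ih => rw [Finset.sum_range_succ, List.range_succ]; simp [ih]

lemma substIter_nil (n : ℕ) : substIter σ n ([] : List A) = [] := by
  rw [substIter_flatMap]; rfl

lemma substIter_suffix_mono {u v : List A} (h : u <:+ v) (q : ℕ) :
    substIter σ q u <:+ substIter σ q v := by
  obtain ⟨pre, hp⟩ := h
  exact ⟨substIter σ q pre, by rw [← substIter_append, hp]⟩

lemma substPow_succ_iter (q : ℕ) (b : A) :
    substPow σ (q+1) b = substIter σ q (σ b) := by
  have h1 : substPow σ (q+1) b = (substWord σ)^[q] (substWord σ [b]) :=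
    Function.iterate_succ_apply _ _ _
  have h2 : substWord σ [b] = σ b := by simp [substWord]
  rw [h1, h2]; rfl

lemma climb {e : ℕ → A} {t : ℕ → List A} {n : ℕ}
    (hchain : ∀ j, j < n → ([e j] ++ t j) <:+ σ (e (j+1))) :
    ∀ q j, j + q ≤ n →
      ([e j] ++ (List.range q).flatMap (fun i => substIter σ i (t (j+i))))
        <:+ substPow σ q (e (j+q)) := by
  intro q
  induction q with
  | zero => intro j _; exact List.suffix_refl _
  | succ q ih =>
      intro j hj
      have h1 := ih j (by omega)
      have h2 := hchain (j+q) (by omega)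
      have h3 := substIter_suffix_mono σ h2 q
      rw [substIter_append, ← substPow_succ_iter] at h3
      have h4 : substIter σ q [e (j+q)] = substPow σ q (e (j+q)) := rfl
      rw [h4] at h3
      have h5 : ([e j] ++ (List.range q).flatMap (fun i => substIter σ i (t (j+i))))
          ++ substIter σ q (t (j+q))
          <:+ substPow σ q (e (j+q)) ++ substIter σ q (t (j+q)) := by
        obtain ⟨pre, hp⟩ := h1
        exact ⟨pre, by rw [← List.append_assoc, hp]⟩
      have h6 := h5.trans h3
      have hrw : ([e j] ++ (List.range q).flatMap (fun i => substIter σ i (t (j+i))))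
          ++ substIter σ q (t (j+q))
          = [e j] ++ (List.range (q+1)).flatMap (fun i => substIter σ i (t (j+i))) := by
        rw [List.range_succ, List.flatMap_append, List.flatMap_singleton, List.append_assoc]
      rw [hrw] at h6
      have : j + q + 1 = j + (q+1) := by omega
      rw [this] at h6
      exact h6

lemma seed [Fintype A] (hne : ∀ a, σ a ≠ []) {K maxσ : ℕ}
    (hK : ∀ a ∉ longLetters σ, ∀ m, (substPow σ m a).length ≤ K)
    (hmax : ∀ a, (σ a).length ≤ maxσ)
    {m : ℕ} {b : A} {W : List A} (hW : W <:+ substPow σ m b)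
    (hsh : ∀ c ∈ W, c ∉ longLetters σ)
    (hlen : 2 + (Fintype.card A) * (maxσ * K) ≤ W.length) :
    ∃ c q u, 1 ≤ q ∧ u ≠ [] ∧ (∀ d ∈ u, d ∉ longLetters σ) ∧
      ([c] ++ u) <:+ substPow σ q c := by
  classical
  obtain ⟨e, t, hen, hchain, htshort, hsuf⟩ := dec σ hne hK m b W hW hsh
  set T := maxσ * K with hT
  -- length bound
  have hlen1 : W.length ≤ 1 + ∑ j ∈ Finset.range m, (substIter σ j (t j)).length := by
    have h2 : ((List.range m).map (fun j => (substIter σ j (t j)).length)).sum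
        = ∑ j ∈ Finset.range m, (substIter σ j (t j)).length := by
      rw [← sum_range_list]
    have hlist := hsuf.length_le
    rw [List.length_append, List.length_flatMap, h2] at hlist
    simp only [List.length_singleton] at hlist
    omega
  have hbnd : ∀ j < m, (substIter σ j (t j)).length ≤ (if t j ≠ [] then T else 0) := by
    intro j hj
    by_cases hnil : t j = []
    · simp [hnil, substIter_nil]
    · rw [if_pos hnil]
      have h1 : (t j).length + 1 ≤ maxσ := by
        have := (hchain j hj).length_le
        have h2 := hmax (e (j+1))
        simp at this
        omega
      rw [substIter_flatMap, List.length_flatMap]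
      have h3 : ∀ x ∈ (t j).map (List.length ∘ substPow σ j), x ≤ K := by
        intro x hx
        simp only [List.mem_map] at hx
        obtain ⟨d, hd, rfl⟩ := hx
        exact hK d (htshort j hj d hd) j
      calc ((t j).map (List.length ∘ substPow σ j)).sum
          ≤ ((t j).map (List.length ∘ substPow σ j)).length * K := by
            simpa [smul_eq_mul] using List.sum_le_card_nsmul _ K h3
        _ ≤ maxσ * K := by
            rw [List.length_map]
            exact Nat.mul_le_mul_right K (by omega)
  set J := (Finset.range m).filter (fun j => t j ≠ []) with hJ
  have hsum : ∑ j ∈ Finset.range m, (substIter σ j (t j)).length ≤ J.card * T := by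
    calc ∑ j ∈ Finset.range m, (substIter σ j (t j)).length
        ≤ ∑ j ∈ Finset.range m, (if t j ≠ [] then T else 0) :=
          Finset.sum_le_sum (fun j hj => hbnd j (Finset.mem_range.1 hj))
      _ = ∑ j ∈ J, T := by rw [hJ, Finset.sum_filter]
      _ = J.card * T := by rw [Finset.sum_const, smul_eq_mul]
  have hcard : Fintype.card A < J.card := by
    by_contra hcl
    push_neg at hcl
    have : J.card * T ≤ Fintype.card A * T := Nat.mul_le_mul_right T hcl
    omega
  obtain ⟨j, hjJ, j', hj'J, hne', heq⟩ :=
    Finset.exists_ne_map_eq_of_card_lt_of_maps_to (t := (Finset.univ : Finset A))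
      (by simpa using hcard) (fun x _ => Finset.mem_univ (e x))
  wlog hlt : j < j' generalizing j j'
  · exact this j' hj'J j hjJ (Ne.symm hne') heq.symm (by omega)
  have hjm : j < m := Finset.mem_range.1 (Finset.mem_filter.1 hjJ).1
  have hj'm : j' < m := Finset.mem_range.1 (Finset.mem_filter.1 hj'J).1
  have htj : t j ≠ [] := (Finset.mem_filter.1 hjJ).2
  set q := j' - j with hq
  have hclimb := climb σ hchain q j (by omega)
  have hjq : j + q = j' := by omega
  rw [hjq, ← heq] at hclimb
  refine ⟨e j, q, (List.range q).flatMap (fun i => substIter σ i (t (j+i))),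
    by omega, ?_, ?_, hclimb⟩
  · obtain ⟨qq, hqq⟩ : ∃ qq, q = qq + 1 := ⟨q - 1, by omega⟩
    rw [hqq, List.range_succ_eq_map, List.flatMap_cons]
    have : substIter σ 0 (t (j+0)) = t j := rfl
    rw [this]
    intro hcon
    exact htj (List.append_eq_nil_iff.1 hcon).1
  · intro d hd
    rw [List.mem_flatMap] at hd
    obtain ⟨i, hi, hdi⟩ := hd
    rw [List.mem_range] at hi
    rw [substIter_flatMap, List.mem_flatMap] at hdi
    obtain ⟨c, hc, hdc⟩ := hdi
    exact short_of_mem_substPow σ hne hK (htshort (j+i) (by omega) c hc) hdc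

variable (σ : A → List A)

lemma substIter_flatMap_out (q : ℕ) (l : List B) (g : B → List A) :
    substIter σ q (l.flatMap g) = l.flatMap (fun x => substIter σ q (g x)) := by
  induction l with
  | nil =>
      have : substIter σ q ([] : List A) = [] := by
        have := substIter_append σ q [] []
        simpa using this
      simpa using this
  | cons d l ih =>
      rw [List.flatMap_cons, List.flatMap_cons, substIter_append, ih]

lemma pump_base {c : A} {q : ℕ} {u : List A}
    (hseed : ([c] ++ u) <:+ substPow σ q c) :
    ∀ k, ([c] ++ (List.range k).flatMap (fun i => substIter σ (i*q) u))
      <:+ substPow σ (k*q) c := by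
  intro k
  induction k with
  | zero =>
      have h0 : (0*q) = 0 := Nat.zero_mul q
      rw [h0]
      show ([c] ++ (List.range 0).flatMap fun i => substIter σ (i*q) u) <:+ [c]
      simp
  | succ k ih =>
      have h3 := substIter_suffix_mono σ ih q
      have hrhs : substIter σ q (substPow σ (k*q) c) = substPow σ ((k+1)*q) c := by
        rw [substPow, ← substIter_add]
        congr 1
        ring
      rw [hrhs, substIter_append] at h3
      have h4 : substIter σ q [c] = substPow σ q c := rfl
      rw [h4, substIter_flatMap_out] at h3
      have h5 : ([c] ++ u) ++ (List.range k).flatMap (fun x => substIter σ q (substIter σ (x*q) u))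
          <:+ substPow σ q c ++ (List.range k).flatMap (fun x => substIter σ q (substIter σ (x*q) u)) := by
        obtain ⟨pre, hp⟩ := hseed
        exact ⟨pre, by rw [← List.append_assoc, hp]⟩
      have h6 := h5.trans h3
      have hx : (List.range k).flatMap (fun x => substIter σ q (substIter σ (x*q) u))
          = (List.range k).flatMap (fun x => substIter σ ((x+1)*q) u) := by
        apply List.flatMap_congr
        intro x _
        show substIter σ q (substIter σ (x*q) u) = substIter σ ((x+1)*q) u
        rw [← substIter_add]
        congr 1
        ring
      have hy : (List.range (k+1)).flatMap (fun i => substIter σ (i*q) u)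
          = u ++ (List.range k).flatMap (fun x => substIter σ ((x+1)*q) u) := by
        rw [List.range_succ_eq_map, List.flatMap_cons, List.flatMap_map]
        congr 1
        show substIter σ (0*q) u = u
        rw [Nat.zero_mul]
        rfl
      rw [hx] at h6
      rw [show ([c] ++ u) ++ (List.range k).flatMap (fun x => substIter σ ((x+1)*q) u)
          = [c] ++ (u ++ (List.range k).flatMap (fun x => substIter σ ((x+1)*q) u)) from by
        rw [List.append_assoc], ← hy] at h6
      exact h6

lemma pump [Fintype A] (hne : ∀ a, σ a ≠ []) {N p : ℕ} (hp1 : 1 ≤ p)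
    (hper : ∀ a ∉ longLetters σ, ∀ s, N ≤ s → substPow σ (s + p) a = substPow σ s a)
    {c : A} {q : ℕ} {u : List A} (hq : 1 ≤ q) (hu : u ≠ [])
    (hush : ∀ d ∈ u, d ∉ longLetters σ)
    (hseed : ([c] ++ u) <:+ substPow σ q c) :
    ∃ D : List A, D ≠ [] ∧ ∀ k, 1 ≤ k →
      (List.replicate k D).flatten ∈ Lang σ := by
  set f : ℕ → List A := fun i => substIter σ (i*q) u with hf
  set D : List A := (List.range p).flatMap (fun s => substIter σ ((N+s)*q) u) with hD
  have hDne : D ≠ [] := by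
    obtain ⟨pp, hpp⟩ : ∃ pp, p = pp + 1 := ⟨p - 1, by omega⟩
    rw [hD, hpp, List.range_succ_eq_map, List.flatMap_cons]
    intro hcon
    exact substIter_ne_nil σ hne hu ((N+0)*q) (List.append_eq_nil_iff.1 hcon).1
  have key : ∀ k, (List.range (N + p*k)).flatMap f
      = (List.range N).flatMap f ++ (List.replicate k D).flatten := by
    intro k
    induction k with
    | zero => simp
    | succ k ih =>
        have h1 : N + p*(k+1) = (N + p*k) + p := by ring
        rw [h1, List.range_add, List.flatMap_append, ih, List.flatMap_map]
        have h2 : (List.range p).flatMap (fun s => f (N + p*k + s)) = D := by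
          rw [hD]
          apply List.flatMap_congr
          intro s _
          show substIter σ ((N + p*k + s)*q) u = substIter σ ((N+s)*q) u
          have h3 : (N + p*k + s)*q = (N+s)*q + (k*q)*p := by ring
          rw [h3]
          exact periodic_word σ hper hush ((N+s)*q) (le_trans (by omega) (Nat.le_mul_of_pos_right _ (by omega))) (k*q)
        rw [h2, List.replicate_succ', List.flatten_append, ← List.append_assoc]
        simp
  refine ⟨D, hDne, fun k hk => ?_⟩
  have hbase := pump_base σ hseed (N + p*k)
  rw [key k] at hbase
  refine ⟨c, (N + p*k)*q, ?_, ?_⟩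
  · have h1 : 1*1 ≤ p*k := Nat.mul_le_mul hp1 hk
    have : 1 ≤ N + p*k := by omega
    exact le_trans this (Nat.le_mul_of_pos_right _ (by omega))
  · have hsfx : (List.replicate k D).flatten <:+
        ([c] ++ (List.range N).flatMap f) ++ (List.replicate k D).flatten :=
      ⟨[c] ++ (List.range N).flatMap f, rfl⟩
    have hb2 : ([c] ++ (List.range N).flatMap f) ++ (List.replicate k D).flatten
        <:+ substPow σ ((N+p*k)*q) c := by
      rw [List.append_assoc]
      exact hbase
    exact (hsfx.trans hb2).isInfix

variable (σ : A → List A)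

lemma seg_eq (x : ℤ → A) (i : ℤ) (len : ℕ) :
    seg x i len = (List.range len).map (fun k : ℕ => x (i + (k:ℤ))) := by
  unfold seg
  show List.map _ ((List.range len).flatMap (fun a => [((a:ℕ) : ℤ)])) = _
  rw [show (List.range len).flatMap (fun a => [((a:ℕ) : ℤ)])
      = (List.range len).map (fun a : ℕ => (a : ℤ)) from by
    induction (List.range len) with
    | nil => rfl
    | cons b l ih => simp [List.flatMap_cons, ih]]
  rw [List.map_map]
  rfl

lemma seg_length (x : ℤ → A) (i : ℤ) (len : ℕ) : (seg x i len).length = len := by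
  rw [seg_eq, List.length_map, List.length_range]

lemma seg_getElem (x : ℤ → A) (i : ℤ) (len : ℕ) (n : ℕ) (h1 : n < (seg x i len).length) :
    (seg x i len)[n]'h1 = x (i + (n:ℤ)) := by
  have h2 : n < len := by rw [seg_length] at h1; exact h1
  have h3 : (seg x i len)[n]'h1
      = ((List.range len).map (fun k : ℕ => x (i + (k:ℤ))))[n]'(by
          rw [List.length_map, List.length_range]; exact h2) := by
    congr 1
    exact seg_eq x i len
  rw [h3, List.getElem_map, List.getElem_range]

lemma Lang_infix_closed' {w v : List A} (hw : w <:+: v) (hv : v ∈ Lang σ) :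
    w ∈ Lang σ := by
  obtain ⟨a, n, hn, hinf⟩ := hv
  exact ⟨a, n, hn, hw.trans hinf⟩

lemma length_flatten_replicate (k : ℕ) (D : List A) :
    ((List.replicate k D).flatten).length = k * D.length := by
  induction k with
  | zero => simp
  | succ k ih =>
      rw [List.replicate_succ, List.flatten_cons, List.length_append, ih]
      ring

lemma getElem_flatten_replicate (D : List A) (hD : D ≠ []) :
    ∀ (k : ℕ) (j : ℕ) (hj : j < ((List.replicate k D).flatten).length),
      ((List.replicate k D).flatten)[j] =
        D[j % D.length]'(Nat.mod_lt j (List.length_pos_iff.2 hD)) := by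
  intro k
  induction k with
  | zero => intro j hj; simp at hj
  | succ k ih =>
      intro j hj
      have hj2 : j < (D ++ (List.replicate k D).flatten).length := by
        rw [← List.flatten_cons, ← List.replicate_succ]; exact hj
      have hstep : ((List.replicate (k+1) D).flatten)[j]'hj
          = (D ++ (List.replicate k D).flatten)[j]'hj2 := rfl
      rw [hstep]
      rcases Nat.lt_or_ge j D.length with h | h
      · rw [List.getElem_append_left h]
        congr 1
        exact (Nat.mod_eq_of_lt h).symm
      · have hj' : j - D.length < ((List.replicate k D).flatten).length := by
          rw [List.length_append] at hj2
          omega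
        rw [List.getElem_append_right h]
        rw [ih (j - D.length) hj']
        congr 1
        conv_rhs => rw [show j = (j - D.length) + D.length by omega]
        rw [Nat.add_mod_right]

lemma no_periodic_powers (hap : Aperiodic σ) {D : List A} (hD : D ≠ [])
    (h : ∀ k, 1 ≤ k → (List.replicate k D).flatten ∈ Lang σ) : False := by
  classical
  have hL : 0 < D.length := List.length_pos_iff.2 hD
  have hLZ : (0:ℤ) < (D.length : ℤ) := by exact_mod_cast hL
  have hLne : (D.length : ℤ) ≠ 0 := by omega
  have hmodlt : ∀ i : ℤ, (i % (D.length : ℤ)).toNat < D.length := by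
    intro i
    have h1 : 0 ≤ i % (D.length : ℤ) := Int.emod_nonneg i hLne
    have h2 : i % (D.length : ℤ) < (D.length : ℤ) := Int.emod_lt_of_pos i hLZ
    omega
  set x : ℤ → A := fun i => D[(i % (D.length : ℤ)).toNat]'(hmodlt i) with hx
  have hseg : ∀ (i : ℤ) (len : ℕ), seg x i len ∈ Lang σ := by
    intro i len
    set r : ℕ := (i % (D.length : ℤ)).toNat with hr
    set k : ℕ := len + 1 with hk
    have hrlt : r < D.length := hmodlt i
    have hlen2 : len ≤ len * D.length := Nat.le_mul_of_pos_right _ hL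
    have hrk : r + len ≤ k * D.length := by
      have : k * D.length = len * D.length + D.length := by rw [hk]; ring
      omega
    set F := (List.replicate k D).flatten with hF
    have hFlen : F.length = k * D.length := length_flatten_replicate k D
    have heq : seg x i len = (F.drop r).take len := by
      apply List.ext_getElem
      · rw [List.length_take, List.length_drop, hFlen]
        have hmin : len ≤ k * D.length - r := by omega
        rw [min_eq_left hmin]
        exact seg_length x i len
      · intro n h1 h2
        have hl : (seg x i len)[n]'h1 = x (i + (n:ℤ)) := seg_getElem x i len n h1
        rw [hl, List.getElem_take, List.getElem_drop]
        have hrn : r + n < F.length := by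
          simp only [List.length_take, List.length_drop] at h2
          omega
        rw [getElem_flatten_replicate D hD k (r+n) hrn]
        have hri : (r : ℤ) = i % (D.length : ℤ) :=
          Int.toNat_of_nonneg (Int.emod_nonneg i hLne)
        have h4 : (i + (n:ℤ)) % (D.length:ℤ) = ((r + n : ℕ) : ℤ) % (D.length:ℤ) := by
          rw [Nat.cast_add, hri, Int.emod_add_emod]
        have h5 : ((r + n : ℕ) : ℤ) % (D.length:ℤ) = (((r + n) % D.length : ℕ) : ℤ) :=
          (Int.natCast_mod _ _).symm
        show D[((i + (n:ℤ)) % (D.length : ℤ)).toNat]'(hmodlt _) = _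
        have hidx : ((i + (n:ℤ)) % (D.length : ℤ)).toNat = (r + n) % D.length := by
          rw [h4, h5, Int.toNat_natCast]
        simp only [hidx]
    rw [heq]
    have hinf : (F.drop r).take len <:+: F :=
      ((F.drop r).take_prefix len).isInfix.trans (F.drop_suffix r).isInfix
    exact Lang_infix_closed' σ hinf (h k (by omega))
  have hXsub : x ∈ Xsub σ := fun n => hseg _ _
  have hper : shiftZ (D.length : ℤ) x = x := by
    funext kk
    show D[((kk + (D.length:ℤ)) % (D.length : ℤ)).toNat]'(hmodlt _)
        = D[(kk % (D.length : ℤ)).toNat]'(hmodlt _)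
    have h7 : (kk + (D.length:ℤ)) % (D.length:ℤ) = kk % (D.length:ℤ) := by
      have h8 := Int.add_mul_emod_self_left (a := kk) (b := (D.length:ℤ)) (c := 1)
      simpa using h8
    simp only [h7]
  exact hap x hXsub D.length hL hper

variable (σ : A → List A)

lemma infix_append_split {W l₁ l₂ : List A} (h : W <:+: l₁ ++ l₂) :
    W <:+: l₁ ∨ W <:+: l₂ ∨
      ∃ w₁ w₂, W = w₁ ++ w₂ ∧ w₁ <:+ l₁ ∧ w₂ <+: l₂ := by
  obtain ⟨pre, suf, hps⟩ := h
  rcases List.append_eq_append_iff.1 hps with ⟨a', ha1, _⟩ | ⟨c', hc1, hc2⟩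
  · exact Or.inl ⟨pre, a', by rw [ha1]⟩
  · rcases List.append_eq_append_iff.1 hc1 with ⟨a'', ha1, ha2⟩ | ⟨c'', hc3, hc4⟩
    · exact Or.inr (Or.inr ⟨a'', c', ha2, ⟨pre, ha1.symm⟩, ⟨suf, hc2.symm⟩⟩)
    · refine Or.inr (Or.inl ⟨c'', suf, ?_⟩)
      rw [hc2, hc4]

lemma prefix_split {W X Y : List A} (h : W <+: X ++ Y) :
    W <+: X ∨ ∃ w', W = X ++ w' ∧ w' <+: Y := by
  obtain ⟨t, ht⟩ := h
  rcases List.append_eq_append_iff.1 ht with ⟨a', ha1, _⟩ | ⟨c', hc1, hc2⟩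
  · exact Or.inl ⟨a', ha1.symm⟩
  · exact Or.inr ⟨c', hc1, ⟨t, hc2.symm⟩⟩

lemma prefix_flatMap_decomp (g : A → List A) :
    ∀ (l : List A) (W : List A), l ≠ [] → W <+: l.flatMap g →
    ∃ l₁ d l₂ w', l = l₁ ++ d :: l₂ ∧ W = l₁.flatMap g ++ w' ∧ w' <+: g d := by
  intro l
  induction l with
  | nil => intro W h; exact absurd rfl h
  | cons d₀ rest ih =>
      intro W _ hW
      rcases rest.eq_nil_or_concat with rfl | hne
      · refine ⟨[], d₀, [], W, rfl, by simp, ?_⟩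
        simpa using hW
      · have hrne : rest ≠ [] := by rcases hne with ⟨l', a, rfl⟩; simp
        rw [List.flatMap_cons] at hW
        rcases prefix_split hW with h | ⟨w', hw1, hw2⟩
        · exact ⟨[], d₀, rest, W, rfl, by simp, h⟩
        · obtain ⟨l₁, d, l₂, w'', h1, h2, h3⟩ := ih w' hrne hw2
          refine ⟨d₀ :: l₁, d, l₂, w'', by rw [h1]; rfl, ?_, h3⟩
          rw [hw1, h2, List.flatMap_cons, List.append_assoc]

lemma infix_flatMap_decomp (g : A → List A) :
    ∀ (l : List A) (W : List A), l ≠ [] → W <:+: l.flatMap g →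
    (∃ d ∈ l, W <:+: g d) ∨
    (∃ d mid d' w₁ w₂, W = w₁ ++ mid.flatMap g ++ w₂ ∧
      w₁ <:+ g d ∧ w₂ <+: g d' ∧ (d :: (mid ++ [d'])).Sublist l) := by
  intro l
  induction l with
  | nil => intro W h; exact absurd rfl h
  | cons d₀ rest ih =>
      intro W _ hW
      rcases rest.eq_nil_or_concat with rfl | hne
      · refine Or.inl ⟨d₀, by simp, ?_⟩
        simpa using hW
      · have hrne : rest ≠ [] := by rcases hne with ⟨l', a, rfl⟩; simp
        rw [List.flatMap_cons] at hW
        rcases infix_append_split hW with h | h | ⟨w₁, w₂, hw, hw1, hw2⟩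
        · exact Or.inl ⟨d₀, by simp, h⟩
        · rcases ih W hrne h with ⟨d, hd, hWd⟩ | ⟨d, mid, d', w₁, w₂, h1, h2, h3, h4⟩
          · exact Or.inl ⟨d, List.mem_cons_of_mem _ hd, hWd⟩
          · exact Or.inr ⟨d, mid, d', w₁, w₂, h1, h2, h3, h4.cons _⟩
        · obtain ⟨l₁, d', l₂, w', h1, h2, h3⟩ := prefix_flatMap_decomp g rest w₂ hrne hw2
          refine Or.inr ⟨d₀, l₁, d', w₁, w', ?_, hw1, h3, ?_⟩
          · rw [hw, h2, List.append_assoc]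
          · apply List.Sublist.cons₂
            rw [h1]
            exact List.Sublist.append (List.Sublist.refl l₁)
              (by simpa using List.sublist_append_left [d'] l₂)

lemma split_rec (hne : ∀ a, σ a ≠ []) {K maxσ : ℕ}
    (hK : ∀ a ∉ longLetters σ, ∀ m, (substPow σ m a).length ≤ K)
    (hmax : ∀ a, (σ a).length ≤ maxσ) (Bside : ℕ) :
    ∀ (n : ℕ) (a : A) (W : List A), W <:+: substPow σ n a →
      (∀ c ∈ W, c ∉ longLetters σ) →
      2*Bside + maxσ*K + 2 ≤ W.length →
      (∃ b m s, s <:+ substPow σ m b ∧ (∀ c ∈ s, c ∉ longLetters σ) ∧ Bside ≤ s.length) ∨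
      (∃ b m s, s <+: substPow σ m b ∧ (∀ c ∈ s, c ∉ longLetters σ) ∧ Bside ≤ s.length) := by
  intro n
  induction n with
  | zero =>
      intro a W hW hsh hlen
      have : W.length ≤ 1 := by
        have := hW.length_le
        simpa [substPow] using this
      omega
  | succ n ih =>
      intro a W hW hsh hlen
      rw [substPow_succ_flatMap] at hW
      rcases infix_flatMap_decomp (substPow σ n) (σ a) W (hne a) hW with
        ⟨d, _, hWd⟩ | ⟨d, mid, d', w₁, w₂, hWeq, hw1, hw2, hsub⟩
      · exact ih d W hWd hsh hlen
      · -- middle bound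
        have hmidshort : ∀ c ∈ mid, c ∉ longLetters σ := by
          intro c hc
          apply short_of_block_short σ hne hK (j := n)
          intro x hx
          apply hsh
          rw [hWeq]
          apply List.mem_append_left
          apply List.mem_append_right
          rw [List.mem_flatMap]
          exact ⟨c, hc, hx⟩
        have hmidlen : (mid.flatMap (substPow σ n)).length ≤ maxσ * K := by
          rw [List.length_flatMap]
          have hb : ∀ x ∈ mid.map (List.length ∘ substPow σ n), x ≤ K := by
            intro x hx
            simp only [List.mem_map] at hx
            obtain ⟨c, hc, rfl⟩ := hx
            exact hK c (hmidshort c hc) n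
          have hmlen : mid.length ≤ maxσ := by
            have h5 := hsub.length_le
            have h6 := hmax a
            simp at h5
            omega
          calc (mid.map (List.length ∘ substPow σ n)).sum
              ≤ (mid.map (List.length ∘ substPow σ n)).length * K := by
                simpa [smul_eq_mul] using List.sum_le_card_nsmul _ K hb
            _ ≤ maxσ * K := by rw [List.length_map]; exact Nat.mul_le_mul_right K hmlen
        have hWlen : W.length = w₁.length + (mid.flatMap (substPow σ n)).length + w₂.length := by
          rw [hWeq]; simp [List.length_append]; omega
        have hcase : Bside ≤ w₁.length ∨ Bside ≤ w₂.length := by omega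
        rcases hcase with hc1 | hc2
        · refine Or.inl ⟨d, n, w₁, hw1, ?_, hc1⟩
          intro c hc
          apply hsh
          rw [hWeq]
          exact List.mem_append_left _ (List.mem_append_left _ hc)
        · refine Or.inr ⟨d', n, w₂, hw2, ?_, hc2⟩
          intro c hc
          apply hsh
          rw [hWeq]
          exact List.mem_append_right _ hc

variable (σ : A → List A)

lemma substWord_rev (v : List A) :
    substWord (fun a => (σ a).reverse) v.reverse = (substWord σ v).reverse := by
  rw [substWord, substWord, List.reverse_flatMap]
  rfl

lemma substIter_rev (n : ℕ) (w : List A) :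
    substIter (fun a => (σ a).reverse) n w.reverse = (substIter σ n w).reverse := by
  induction n with
  | zero => rfl
  | succ n ih => rw [substIter_succ', substIter_succ', ih, substWord_rev]

lemma substPow_rev (n : ℕ) (a : A) :
    substPow (fun a => (σ a).reverse) n a = (substPow σ n a).reverse := by
  have := substIter_rev σ n [a]
  simpa [substPow] using this

lemma longLetters_rev : longLetters (fun a => (σ a).reverse) = longLetters σ := by
  ext a
  have hfun : (fun n => (substPow (fun a => (σ a).reverse) n a).length)
      = (fun n => (substPow σ n a).length) := by
    funext n
    rw [substPow_rev, List.length_reverse]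
  simp only [longLetters, Set.mem_setOf_eq, hfun]

lemma reverse_flatten_replicate (k : ℕ) (D : List A) :
    ((List.replicate k D).flatten).reverse = (List.replicate k D.reverse).flatten := by
  induction k with
  | zero => simp
  | succ k ih =>
      rw [List.replicate_succ, List.flatten_cons, List.reverse_append, ih,
        List.replicate_succ', List.flatten_append]
      simp

lemma seg_take_drop (x : ℤ → A) (i j : ℤ) (len L : ℕ) (h1 : j ≤ i)
    (h2 : i + len ≤ j + L) :
    seg x i len = ((seg x j L).drop (i - j).toNat).take len := by
  have hij : ((i - j).toNat : ℤ) = i - j := Int.toNat_of_nonneg (by omega)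
  apply List.ext_getElem
  · rw [seg_length, List.length_take, List.length_drop, seg_length]
    have : len ≤ L - (i - j).toNat := by omega
    rw [min_eq_left this]
  · intro n hn1 hn2
    rw [seg_getElem, List.getElem_take, List.getElem_drop, seg_getElem]
    congr 1
    push_cast
    omega

lemma LangX_subset_Lang : LangX σ ⊆ Lang σ := by
  rintro W ⟨x, hx, i, hseg⟩
  set len := W.length with hlen
  set n : ℕ := len + i.natAbs with hn
  have h1 : -(n:ℤ) ≤ i := by
    rw [hn]
    omega
  have h2 : i + (len:ℤ) ≤ -(n:ℤ) + (2*n+1 : ℕ) := by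
    rw [hn]
    omega
  have heq := seg_take_drop x i (-(n:ℤ)) len (2*n+1) h1 (by omega)
  have hinf : seg x i len <:+: seg x (-(n:ℤ)) (2*n+1) := by
    rw [heq]
    exact ((List.take_prefix _ _).isInfix).trans (List.drop_suffix _ _).isInfix
  rw [← hseg]
  exact Lang_infix_closed' σ hinf (hx n)

end ProofAux

/-- For an aperiodic substitution there is `M > 0` such that every word
`W ∈ L(X_σ)` with `|W| ≥ M` contains a letter from `A_l`. -/
theorem long_letter_in_long_words
    {A : Type*} [Fintype A] (σ : A → List A) (hne : ∀ a, σ a ≠ [])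
    (hunc : ¬ (Xsub σ).Countable) (hap : Aperiodic σ) :
    ∃ M : ℕ, 0 < M ∧ ∀ W ∈ LangX σ, M ≤ W.length → ∃ a ∈ longLetters σ, a ∈ W := by
  classical
  obtain ⟨K, hK⟩ := exists_short_bound σ hne
  set maxσ := Finset.univ.sup (fun a : A => (σ a).length) with hmaxdef
  have hmax : ∀ a, (σ a).length ≤ maxσ := fun a =>
    Finset.le_sup (f := fun a : A => (σ a).length) (Finset.mem_univ a)
  set Bside := 2 + (Fintype.card A) * (maxσ * K) with hBdef
  refine ⟨2*Bside + maxσ*K + 2, by omega, ?_⟩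
  intro W hWX hWlen
  by_contra hcon
  push_neg at hcon
  have hsh : ∀ c ∈ W, c ∉ longLetters σ := fun c hc hl => hcon c hl hc
  have hWL : W ∈ Lang σ := LangX_subset_Lang σ hWX
  obtain ⟨a₀, n₀, hn₀, hinf⟩ := hWL
  have hsplit := split_rec σ hne hK hmax Bside n₀ a₀ W hinf hsh hWlen
  rcases hsplit with ⟨b, m, s, hsfx, hssh, hslen⟩ | ⟨b, m, s, hpfx, hssh, hslen⟩
  · obtain ⟨c, q, u, hq, hu, hush, hseed⟩ :=
      seed σ hne hK hmax hsfx hssh (by omega)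
    obtain ⟨N, p, hp1, hper⟩ := exists_eventually_periodic σ hK
    obtain ⟨D, hD, hpow⟩ := pump σ hne hp1 hper hq hu hush hseed
    exact no_periodic_powers σ hap hD hpow
  · -- use the reversed substitution
    set σr := fun a : A => (σ a).reverse with hσr
    have hner : ∀ a, σr a ≠ [] := by
      intro a h
      rw [hσr] at h
      simp only at h
      exact hne a (by simpa using congrArg List.reverse h)
    have hlongr : longLetters σr = longLetters σ := longLetters_rev σ
    have hKr : ∀ a ∉ longLetters σr, ∀ m', (substPow σr m' a).length ≤ K := by
      intro a ha m'
      rw [hσr, substPow_rev, List.length_reverse]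
      rw [hlongr] at ha
      exact hK a ha m'
    have hmaxr : ∀ a, (σr a).length ≤ maxσ := by
      intro a
      rw [hσr, List.length_reverse]
      exact hmax a
    have hsrev : s.reverse <:+ substPow σr m b := by
      rw [hσr, substPow_rev]
      exact List.reverse_suffix.2 hpfx
    have hsshr : ∀ c ∈ s.reverse, c ∉ longLetters σr := by
      intro c hc
      rw [hlongr]
      exact hssh c (List.mem_reverse.1 hc)
    have hslenr : Bside ≤ s.reverse.length := by
      rw [List.length_reverse]; exact hslen
    obtain ⟨c, q, u, hq, hu, hush, hseed⟩ :=
      seed σr hner hKr hmaxr hsrev hsshr (by omega)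
    obtain ⟨Nr, pr, hp1r, hperr⟩ := exists_eventually_periodic σr hKr
    obtain ⟨D, hD, hpow⟩ := pump σr hner hp1r hperr hq hu hush hseed
    have hDrev : D.reverse ≠ [] := by
      intro h
      apply hD
      have := congrArg List.reverse h
      simpa using this
    apply no_periodic_powers σ hap hDrev
    intro k hk
    obtain ⟨a, n, hn, hinf2⟩ := hpow k hk
    refine ⟨a, n, hn, ?_⟩
    have hpowrev : substIter σr n [a] = (substIter σ n [a]).reverse := by
      have := substPow_rev σ n a
      rw [hσr]
      exact this
    rw [hpowrev] at hinf2
    have h3 : ((List.replicate k D).flatten).reverse.reverse <:+: (substIter σ n [a]).reverse := by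
      rwa [List.reverse_reverse]
    have h4 := List.reverse_infix.1 h3
    rwa [reverse_flatten_replicate] at h4


end PaperStmt
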